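/- arXiv:1112.6103 — 2 statements merged into one kernel-verified Lean document; each statement's English description precedes it below -/
import Mathlib

section
/- (Lemma 1.15) Let F be a field of characteristic 0, L a Lie algebra over F, C an F-vector space, and τ : L × L → C a 2-cocycle; let L̃ = L × C be the corresponding central extension with bracket [(x,e),(y,f)] = ([x,y], τ(x,y)). Let G be a finite-dimensional simple Lie subalgebra of L and let D be a subspace of L such that [x,d] = 0 for all x ∈ G and d ∈ D (D is a trivial G-submodule of L under the adjoint action). Then τ(x,d) = 0 for all x ∈ G and d ∈ D; in particular D × {0} is a trivial G-submodule of L̃. -/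
/-- Lemma 1.15: If `G` is a finite-dimensional simple Lie subalgebra of `L`
and `D` is a subspace of `L` centralized by `G`, then any 2-cocycle `τ` on `L` vanishes on
`G × D`; in particular `D × {0}` is a trivial `G`-submodule of the central extension `L × C`. -/
theorem stmt_2 (F L C : Type*) [Field F] [CharZero F] [LieRing L] [LieAlgebra F L]
    [AddCommGroup C] [Module F C]
    (τ : L →ₗ[F] L →ₗ[F] C)
    (hτ_alt : ∀ x : L, τ x x = 0)
    (hτ_cocycle : ∀ x y z : L, τ ⁅x, y⁆ z + τ ⁅y, z⁆ x + τ ⁅z, x⁆ y = 0)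
    (G : LieSubalgebra F L) [FiniteDimensional F G] [LieAlgebra.IsSimple F G]
    (D : Submodule F L)
    (hD : ∀ x ∈ G, ∀ d ∈ D, ⁅x, d⁆ = 0) :
    ∀ x ∈ G, ∀ d ∈ D, τ x d = 0 := by
  intro x hx d hd
  have key : ∀ a b : G, τ ⁅(a : L), (b : L)⁆ d = 0 := by
    intro a b
    have h1 : ⁅(b : L), d⁆ = 0 := hD b b.2 d hd
    have h2 : ⁅d, (a : L)⁆ = 0 := by
      rw [← neg_eq_zero, lie_skew]; exact hD a a.2 d hd
    have := hτ_cocycle (a : L) (b : L) d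
    rw [h1, h2] at this
    simpa using this
  have hperf : LieAlgebra.derivedSeries F G 1 = ⊤ := by
    rcases LieAlgebra.IsSimple.eq_bot_or_eq_top (LieAlgebra.derivedSeries F G 1) with h | h
    · exfalso
      apply LieAlgebra.IsSimple.non_abelian F (L := G)
      have : IsLieAbelian (⊤ : LieIdeal F G) :=
        (LieAlgebra.abelian_iff_derived_one_eq_bot (⊤ : LieIdeal F G)).mpr h
      rwa [lie_abelian_iff_equiv_lie_abelian LieIdeal.topEquiv] at this
    · exact h
  have hmem : (⟨x, hx⟩ : G) ∈ LieAlgebra.derivedSeries F G 1 := hperf ▸ trivial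
  have hspan : (⟨x, hx⟩ : G) ∈ Submodule.span F
      { m : G | ∃ (a : (⊤ : LieIdeal F G)) (b : (⊤ : LieIdeal F G)), ⁅(a : G), (b : G)⁆ = m } := by
    rw [← LieSubmodule.lieIdeal_oper_eq_linear_span]
    exact hmem
  refine Submodule.span_induction (p := fun (g : G) _ => τ (g : L) d = 0) ?_ ?_ ?_ ?_ hspan
  · rintro g ⟨a, b, rfl⟩
    have := key (a : G) (b : G)
    simpa using this
  · simp
  · intro g h _ _ hg hh
    simp [map_add, hg, hh]
  · intro t g _ hg
    have : ((t • g : G) : L) = t • (g : L) := rfl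
    rw [this, map_smul, LinearMap.smul_apply, hg, smul_zero]
end

section
/- Let F be a field of characteristic 0, I an infinite set, Ī a disjoint copy of I, J = I ⊎ Ī, and V the F-vector space with basis {v_j : j ∈ J}. Let ω be the bilinear form on V determined by ω(v_i, v_ī) = 2 = −ω(v_ī, v_i) for i ∈ I and ω(v_j, v_k) = 0 for all other pairs of basis vectors. Let sp(I) be the set of all finite-rank F-linear endomorphisms φ of V satisfying ω(φ(v), w) = −ω(v, φ(w)) for all v, w ∈ V (equivalently, the skew-adjoint elements of the span of the operators e_{j,k}, j,k ∈ J, where e_{j,k}(v_i) = δ_{k,i} v_j). Then sp(I) is a Lie subalgebra of End_F(V) and V is an irreducible sp(I)-module: the only subspaces of V invariant under all elements of sp(I) are {0} and V. -/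
attribute [local instance] LieRing.ofAssociativeRing

/-- Let `V` be the vector space with basis indexed by `J = I ⊎ Ī` (realized as
`(I ⊕ I) →₀ F`) and `ω` the symplectic-type bilinear form determined on the basis as indicated.
Then the set `sp(I)` of finite-rank endomorphisms `φ` of `V` with `ω (φ v) w = - ω v (φ w)` is
a Lie subalgebra of `End F V`, and `V` is an irreducible `sp(I)`-module: the only subspaces of
`V` invariant under all elements of `sp(I)` are `⊥` and `⊤`. -/
theorem stmt_12 (F I : Type*) [Field F] [CharZero F] [Infinite I] [DecidableEq I]
    (ω : ((I ⊕ I) →₀ F) →ₗ[F] ((I ⊕ I) →₀ F) →ₗ[F] F)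
    (hω₁ : ∀ i i' : I, ω (Finsupp.single (Sum.inl i) 1) (Finsupp.single (Sum.inr i') 1)
      = if i = i' then 2 else 0)
    (hω₂ : ∀ i i' : I, ω (Finsupp.single (Sum.inr i) 1) (Finsupp.single (Sum.inl i') 1)
      = if i = i' then -2 else 0)
    (hω₃ : ∀ i i' : I, ω (Finsupp.single (Sum.inl i) 1) (Finsupp.single (Sum.inl i') 1) = 0)
    (hω₄ : ∀ i i' : I, ω (Finsupp.single (Sum.inr i) 1) (Finsupp.single (Sum.inr i') 1) = 0)
    (sp : Set (Module.End F ((I ⊕ I) →₀ F)))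
    (hsp : sp = {φ : Module.End F ((I ⊕ I) →₀ F) |
      Module.Finite F (LinearMap.range φ) ∧ ∀ v w, ω (φ v) w = - ω v (φ w)}) :
    (∃ S : LieSubalgebra F (Module.End F ((I ⊕ I) →₀ F)), (S : Set (Module.End F ((I ⊕ I) →₀ F))) = sp) ∧
    (∀ W : Submodule F ((I ⊕ I) →₀ F),
      (∀ φ ∈ sp, ∀ v ∈ W, φ v ∈ W) → W = ⊥ ∨ W = ⊤) := by
  classical
  -- evaluation lemmas for ω against basis vectors
  have evA : ∀ (i : I) (y : (I ⊕ I) →₀ F),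
      ω (Finsupp.single (Sum.inl i) 1) y = 2 * y (Sum.inr i) := by
    intro i y
    induction y using Finsupp.induction_linear with
    | zero => simp
    | add a b ha hb => simp only [map_add, Finsupp.add_apply, ha, hb]; ring
    | single j c =>
      rcases j with j | j
      · rw [← Finsupp.smul_single_one (Sum.inl j) c, map_smul]
        simp [hω₃, Finsupp.single_apply]
      · rw [← Finsupp.smul_single_one (Sum.inr j) c, map_smul]
        by_cases h : i = j
        · subst h; simp [hω₁, Finsupp.single_apply]; ring
        · simp [hω₁, Finsupp.single_apply, h, Ne.symm h]
  have evB : ∀ (i : I) (y : (I ⊕ I) →₀ F),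
      ω (Finsupp.single (Sum.inr i) 1) y = -2 * y (Sum.inl i) := by
    intro i y
    induction y using Finsupp.induction_linear with
    | zero => simp
    | add a b ha hb => simp only [map_add, Finsupp.add_apply, ha, hb]; ring
    | single j c =>
      rcases j with j | j
      · rw [← Finsupp.smul_single_one (Sum.inl j) c, map_smul]
        by_cases h : i = j
        · subst h; simp [hω₂, Finsupp.single_apply]; ring
        · simp [hω₂, Finsupp.single_apply, h, Ne.symm h]
      · rw [← Finsupp.smul_single_one (Sum.inr j) c, map_smul]
        simp [hω₄, Finsupp.single_apply]
  have evC : ∀ (i : I) (x : (I ⊕ I) →₀ F),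
      ω x (Finsupp.single (Sum.inl i) 1) = -2 * x (Sum.inr i) := by
    intro i x
    induction x using Finsupp.induction_linear with
    | zero => simp
    | add a b ha hb =>
      simp only [map_add, LinearMap.add_apply, Finsupp.add_apply, ha, hb]; ring
    | single j c =>
      rcases j with j | j
      · rw [← Finsupp.smul_single_one (Sum.inl j) c, map_smul]
        simp [hω₃, Finsupp.single_apply]
      · rw [← Finsupp.smul_single_one (Sum.inr j) c, map_smul]
        by_cases h : j = i
        · subst h; simp [hω₂, Finsupp.single_apply]; ring
        · simp [hω₂, Finsupp.single_apply, h, Ne.symm h]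
  have evD : ∀ (i : I) (x : (I ⊕ I) →₀ F),
      ω x (Finsupp.single (Sum.inr i) 1) = 2 * x (Sum.inl i) := by
    intro i x
    induction x using Finsupp.induction_linear with
    | zero => simp
    | add a b ha hb =>
      simp only [map_add, LinearMap.add_apply, Finsupp.add_apply, ha, hb]; ring
    | single j c =>
      rcases j with j | j
      · rw [← Finsupp.smul_single_one (Sum.inl j) c, map_smul]
        by_cases h : j = i
        · subst h; simp [hω₁, Finsupp.single_apply]; ring
        · simp [hω₁, Finsupp.single_apply, h, Ne.symm h]
      · rw [← Finsupp.smul_single_one (Sum.inr j) c, map_smul]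
        simp [hω₄, Finsupp.single_apply]
  -- elementary operators
  let E : (I ⊕ I) → (I ⊕ I) → Module.End F ((I ⊕ I) →₀ F) := fun j k =>
    (Finsupp.lsingle j).comp (Finsupp.lapply k)
  have hE : ∀ j k (x : (I ⊕ I) →₀ F), E j k x = Finsupp.single j (x k) := fun _ _ _ => rfl
  have hEfin : ∀ j k, Module.Finite F (LinearMap.range (E j k)) := by
    intro j k
    have hle : LinearMap.range (E j k) ≤ LinearMap.range (Finsupp.lsingle (M := F) j) := by
      rintro _ ⟨v, rfl⟩
      exact ⟨v k, rfl⟩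
    haveI : Module.Finite F (LinearMap.range (Finsupp.lsingle (M := F) (α := I ⊕ I) j)) :=
      Module.Finite.range _
    exact Submodule.finiteDimensional_of_le hle
  have he : ∀ i : I, E (Sum.inl i) (Sum.inr i) ∈ sp := by
    intro i
    rw [hsp]
    refine ⟨hEfin _ _, fun v w => ?_⟩
    rw [hE, hE, ← Finsupp.smul_single_one (Sum.inl i) (v (Sum.inr i)),
      ← Finsupp.smul_single_one (Sum.inl i) (w (Sum.inr i)), map_smul, map_smul]
    simp only [LinearMap.smul_apply, smul_eq_mul, evA, evC]
    ring
  have hf : ∀ i : I, E (Sum.inr i) (Sum.inl i) ∈ sp := by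
    intro i
    rw [hsp]
    refine ⟨hEfin _ _, fun v w => ?_⟩
    rw [hE, hE, ← Finsupp.smul_single_one (Sum.inr i) (v (Sum.inl i)),
      ← Finsupp.smul_single_one (Sum.inr i) (w (Sum.inl i)), map_smul, map_smul]
    simp only [LinearMap.smul_apply, smul_eq_mul, evB, evD]
    ring
  let G : I → I → Module.End F ((I ⊕ I) →₀ F) := fun a b =>
    E (Sum.inl a) (Sum.inl b) - E (Sum.inr b) (Sum.inr a)
  have hg : ∀ a b : I, G a b ∈ sp := by
    intro a b
    rw [hsp]
    constructor
    · have hle : LinearMap.range (G a b) ≤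
          LinearMap.range (E (Sum.inl a) (Sum.inl b)) ⊔
            LinearMap.range (E (Sum.inr b) (Sum.inr a)) := by
        rintro _ ⟨v, rfl⟩
        exact Submodule.sub_mem _ (Submodule.mem_sup_left (LinearMap.mem_range_self _ v))
          (Submodule.mem_sup_right (LinearMap.mem_range_self _ v))
      haveI := hEfin (Sum.inl a) (Sum.inl b)
      haveI := hEfin (Sum.inr b) (Sum.inr a)
      exact Submodule.finiteDimensional_of_le hle
    · intro v w
      have h1 : (G a b) v = Finsupp.single (Sum.inl a) (v (Sum.inl b))
          - Finsupp.single (Sum.inr b) (v (Sum.inr a)) := rfl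
      have h2 : (G a b) w = Finsupp.single (Sum.inl a) (w (Sum.inl b))
          - Finsupp.single (Sum.inr b) (w (Sum.inr a)) := rfl
      rw [h1, h2,
        ← Finsupp.smul_single_one (Sum.inl a) (v (Sum.inl b)),
        ← Finsupp.smul_single_one (Sum.inr b) (v (Sum.inr a)),
        ← Finsupp.smul_single_one (Sum.inl a) (w (Sum.inl b)),
        ← Finsupp.smul_single_one (Sum.inr b) (w (Sum.inr a))]
      simp only [map_sub, map_smul, LinearMap.sub_apply, LinearMap.smul_apply, smul_eq_mul,
        evA, evB, evC, evD]
      ring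
  constructor
  · -- sp is a Lie subalgebra
    refine ⟨{ carrier := sp
              add_mem' := ?_
              zero_mem' := ?_
              smul_mem' := ?_
              lie_mem' := ?_ }, rfl⟩
    · intro φ ψ hφ hψ
      replace hφ : φ ∈ sp := hφ
      replace hψ : ψ ∈ sp := hψ
      show φ + ψ ∈ sp
      rw [hsp] at hφ hψ ⊢
      obtain ⟨hφ₁, hφ₂⟩ := hφ
      obtain ⟨hψ₁, hψ₂⟩ := hψ
      constructor
      · have hle : LinearMap.range (φ + ψ) ≤ LinearMap.range φ ⊔ LinearMap.range ψ := by
          rintro _ ⟨v, rfl⟩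
          exact Submodule.add_mem _ (Submodule.mem_sup_left (LinearMap.mem_range_self _ v))
            (Submodule.mem_sup_right (LinearMap.mem_range_self _ v))
        haveI := hφ₁; haveI := hψ₁
        exact Submodule.finiteDimensional_of_le hle
      · intro v w
        simp only [LinearMap.add_apply, map_add, LinearMap.add_apply, hφ₂, hψ₂]
        ring
    · show (0 : Module.End F ((I ⊕ I) →₀ F)) ∈ sp
      rw [hsp]
      refine ⟨?_, ?_⟩
      · rw [LinearMap.range_zero]; infer_instance
      · intro v w; simp
    · intro c φ hφ
      replace hφ : φ ∈ sp := hφ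
      show c • φ ∈ sp
      rw [hsp] at hφ ⊢
      obtain ⟨hφ₁, hφ₂⟩ := hφ
      constructor
      · have hle : LinearMap.range (c • φ) ≤ LinearMap.range φ := by
          rintro _ ⟨v, rfl⟩
          exact Submodule.smul_mem _ c (LinearMap.mem_range_self _ v)
        haveI := hφ₁
        exact Submodule.finiteDimensional_of_le hle
      · intro v w
        simp only [LinearMap.smul_apply, map_smul, LinearMap.smul_apply, smul_eq_mul, hφ₂]
        ring
    · intro φ ψ hφ hψ
      replace hφ : φ ∈ sp := hφ
      replace hψ : ψ ∈ sp := hψ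
      show ⁅φ, ψ⁆ ∈ sp
      rw [hsp] at hφ hψ ⊢
      obtain ⟨hφ₁, hφ₂⟩ := hφ
      obtain ⟨hψ₁, hψ₂⟩ := hψ
      constructor
      · have hle : LinearMap.range ⁅φ, ψ⁆ ≤ LinearMap.range φ ⊔ LinearMap.range ψ := by
          rintro _ ⟨v, rfl⟩
          rw [show ⁅φ, ψ⁆ = φ * ψ - ψ * φ from LieRing.of_associative_ring_bracket φ ψ]
          exact Submodule.sub_mem _ (Submodule.mem_sup_left (LinearMap.mem_range_self _ _))
            (Submodule.mem_sup_right (LinearMap.mem_range_self _ _))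
        haveI := hφ₁; haveI := hψ₁
        exact Submodule.finiteDimensional_of_le hle
      · intro v w
        rw [show ⁅φ, ψ⁆ = φ * ψ - ψ * φ from LieRing.of_associative_ring_bracket φ ψ]
        simp only [LinearMap.sub_apply, Module.End.mul_apply, map_sub, LinearMap.sub_apply]
        rw [hφ₂, hψ₂, hψ₂, hφ₂]
        ring
  · -- irreducibility
    intro W hW
    by_cases hbot : W = ⊥
    · exact Or.inl hbot
    right
    obtain ⟨x, hxW, hx0⟩ := (Submodule.ne_bot_iff W).mp hbot
    obtain ⟨j, hj⟩ : ∃ j, x j ≠ 0 := by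
      by_contra h
      push_neg at h
      exact hx0 (Finsupp.ext h)
    have hwi : ∃ i : I, Finsupp.single (Sum.inr i) (1 : F) ∈ W := by
      rcases j with i | i
      · refine ⟨i, ?_⟩
        have h1 : E (Sum.inr i) (Sum.inl i) x ∈ W := hW _ (hf i) x hxW
        rw [hE] at h1
        have h2 : (x (Sum.inl i))⁻¹ • Finsupp.single (Sum.inr i) (x (Sum.inl i)) ∈ W :=
          Submodule.smul_mem _ _ h1
        rwa [Finsupp.smul_single, smul_eq_mul, inv_mul_cancel₀ hj] at h2
      · refine ⟨i, ?_⟩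
        have h1 : E (Sum.inl i) (Sum.inr i) x ∈ W := hW _ (he i) x hxW
        rw [hE] at h1
        have h2 : (x (Sum.inr i))⁻¹ • Finsupp.single (Sum.inl i) (x (Sum.inr i)) ∈ W :=
          Submodule.smul_mem _ _ h1
        rw [Finsupp.smul_single, smul_eq_mul, inv_mul_cancel₀ hj] at h2
        have h3 : E (Sum.inr i) (Sum.inl i) (Finsupp.single (Sum.inl i) (1:F)) ∈ W :=
          hW _ (hf i) _ h2
        rwa [hE, Finsupp.single_apply, if_pos rfl] at h3
    obtain ⟨i0, hi0⟩ := hwi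
    have hw_all : ∀ b : I, Finsupp.single (Sum.inr b) (1 : F) ∈ W := by
      intro b
      have h1 : G i0 b (Finsupp.single (Sum.inr i0) (1:F)) ∈ W := hW _ (hg i0 b) _ hi0
      have h2 : G i0 b (Finsupp.single (Sum.inr i0) (1:F))
          = -(Finsupp.single (Sum.inr b) (1:F)) := by
        show Finsupp.single (Sum.inl i0) ((Finsupp.single (Sum.inr i0) (1:F)) (Sum.inl b))
          - Finsupp.single (Sum.inr b) ((Finsupp.single (Sum.inr i0) (1:F)) (Sum.inr i0)) = _
        simp [Finsupp.single_apply]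
      rw [h2] at h1
      simpa using Submodule.neg_mem _ h1
    have hu_all : ∀ a : I, Finsupp.single (Sum.inl a) (1 : F) ∈ W := by
      intro a
      have h1 : E (Sum.inl a) (Sum.inr a) (Finsupp.single (Sum.inr a) (1:F)) ∈ W :=
        hW _ (he a) _ (hw_all a)
      rwa [hE, Finsupp.single_apply, if_pos rfl] at h1
    rw [eq_top_iff]
    intro y _
    induction y using Finsupp.induction_linear with
    | zero => exact Submodule.zero_mem _
    | add a b ha hb => exact Submodule.add_mem _ (ha trivial) (hb trivial)
    | single k c =>
      rw [← Finsupp.smul_single_one]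
      refine Submodule.smul_mem _ _ ?_
      rcases k with a | b
      · exact hu_all a
      · exact hw_all b
end
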